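/- Let n ≥ 1, γ > 0, C > 0, let y₁, …, yₙ ∈ ℝ, x₁, …, xₙ ∈ ℝ^p, and let v₁, …, vₙ ≥ 0 be weights with ‖vᵢ xᵢ‖₂ ≤ C for every i. Let ρ : ℝ → ℝ be three times continuously differentiable with |ρ'''(t)| ≤ γ ρ''(t) for all t ∈ ℝ. Define the Schweppe loss L(θ) = (1/n) Σᵢ ρ((yᵢ − ⟨xᵢ, θ⟩) vᵢ) for θ ∈ ℝ^p. Then L is (γC, 2)-self-concordant, i.e. |∇³L(θ)[v,u,u]| ≤ γC·(uᵀ∇²L(θ)u)·‖v‖₂ for all θ, u, v ∈ ℝ^p. -/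

import Mathlib

open scoped RealInnerProductSpace

lemma affine_comp_iteratedFDeriv {E : Type*} [NormedAddCommGroup E] [NormedSpace ℝ E]
    (k : ℕ) :
    ∀ (f : ℝ → ℝ), ContDiff ℝ k f → ∀ (c : ℝ) (ℓ : E →L[ℝ] ℝ) (θ : E) (m : Fin k → E),
      iteratedFDeriv ℝ k (fun θ => f (c + ℓ θ)) θ m
        = iteratedDeriv k f (c + ℓ θ) * ∏ j, ℓ (m j) := by
  induction k with
  | zero =>
    intro f hf c ℓ θ m
    simp [iteratedFDeriv_zero_apply]
  | succ k IH =>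
    intro f hf c ℓ θ m
    have hf' : Differentiable ℝ f ∧ ContDiff ℝ k (deriv f) := by
      have h : ContDiff ℝ ((k : ℕ∞) + 1) f := by exact_mod_cast hf
      rw [contDiff_succ_iff_deriv] at h
      exact ⟨h.1, by exact_mod_cast h.2.2⟩
    set T : ℝ →L[ℝ] (E →L[ℝ] ℝ) :=
      ContinuousLinearMap.smulRight (ContinuousLinearMap.id ℝ ℝ) ℓ with hT
    have hfd : (fun y : E => fderiv ℝ (fun θ => f (c + ℓ θ)) y)
        = T ∘ (fun y : E => deriv f (c + ℓ y)) := by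
      funext y
      have h1 : HasDerivAt f (deriv f (c + ℓ y)) (c + ℓ y) :=
        (hf'.1 (c + ℓ y)).hasDerivAt
      have h2 : HasFDerivAt (fun θ : E => c + ℓ θ) ℓ y := ℓ.hasFDerivAt.const_add c
      have h3 : HasFDerivAt (fun θ : E => f (c + ℓ θ)) (deriv f (c + ℓ y) • ℓ) y :=
        h1.comp_hasFDerivAt y h2
      rw [h3.fderiv]
      ext w
      simp [hT]
    have hcd : ContDiff ℝ k (fun y : E => deriv f (c + ℓ y)) :=
      hf'.2.comp (contDiff_const.add ℓ.contDiff)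
    have hcomp := T.iteratedFDeriv_comp_left (hcd.contDiffAt (x := θ)) (le_refl _)
    rw [iteratedFDeriv_succ_apply_right, hfd, hcomp]
    simp only [ContinuousLinearMap.compContinuousMultilinearMap_coe, Function.comp_apply]
    rw [IH (deriv f) hf'.2 c ℓ θ (Fin.init m)]
    rw [← iteratedDeriv_succ']
    simp only [hT, ContinuousLinearMap.smulRight_apply, ContinuousLinearMap.id_apply,
      ContinuousLinearMap.smul_apply, smul_eq_mul]
    rw [Fin.prod_univ_castSucc]
    simp only [Fin.init]
    ring

/-- if `ρ` is `(γ,2)`-self-concordant and the Schweppe weights satisfy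
`‖vᵢ xᵢ‖ ≤ C`, then the Schweppe loss `L(θ) = (1/n) ∑ᵢ ρ((yᵢ - ⟨xᵢ,θ⟩) vᵢ)` is
`(γ C, 2)`-self-concordant. -/
theorem stmt_13 {p : ℕ} (n : ℕ) (hn : 1 ≤ n) (γ C : ℝ) (hγ : 0 < γ) (hC : 0 < C)
    (y : Fin n → ℝ) (x : Fin n → EuclideanSpace ℝ (Fin p)) (v : Fin n → ℝ)
    (hv : ∀ i, 0 ≤ v i) (hvx : ∀ i, ‖v i • x i‖ ≤ C)
    (ρ : ℝ → ℝ) (hρC3 : ContDiff ℝ 3 ρ)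
    (hρSC : ∀ t : ℝ, |iteratedDeriv 3 ρ t| ≤ γ * iteratedDeriv 2 ρ t)
    (L : EuclideanSpace ℝ (Fin p) → ℝ)
    (hL : ∀ θ, L θ = (1 / (n : ℝ)) * ∑ i, ρ ((y i - ⟪x i, θ⟫) * v i)) :
    ∀ θ u w : EuclideanSpace ℝ (Fin p),
      |iteratedFDeriv ℝ 3 L θ ![w, u, u]| ≤
        γ * C * iteratedFDeriv ℝ 2 L θ ![u, u] * ‖w‖ := by
  intro θ u w
  set c : Fin n → ℝ := fun i => y i * v i with hc
  set ℓ : Fin n → (EuclideanSpace ℝ (Fin p) →L[ℝ] ℝ) := fun i => (-(v i)) • (innerSL ℝ (x i)) with hℓ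
  set F : Fin n → EuclideanSpace ℝ (Fin p) → ℝ := fun i θ => (1 / (n : ℝ)) • ρ (c i + ℓ i θ) with hF
  have hinv : (0:ℝ) ≤ 1 / (n:ℝ) := by positivity
  have hℓapp : ∀ i (z : EuclideanSpace ℝ (Fin p)), ℓ i z = -(v i) * ⟪x i, z⟫ := by
    intro i z
    simp [hℓ]
  have hLF : L = fun θ' => ∑ i, F i θ' := by
    funext θ'
    rw [hL θ', Finset.mul_sum]
    refine Finset.sum_congr rfl fun i _ => ?_
    simp only [hF, smul_eq_mul]
    congr 1
    rw [hℓapp]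
    simp only [hc]
    ring
  have haff : ∀ (k : ℕ) i, ContDiff ℝ k ρ → ContDiff ℝ k (fun θ' : EuclideanSpace ℝ (Fin p) => ρ (c i + ℓ i θ')) :=
    fun k i h => h.comp (contDiff_const.add (ℓ i).contDiff)
  have hFc : ∀ (k : ℕ), ContDiff ℝ k ρ → ∀ i, ContDiff ℝ k (F i) := by
    intro k h i
    exact (contDiff_const (c := (1 / (n:ℝ)))).smul (haff k i h)
  have hD : ∀ (k : ℕ), ContDiff ℝ k ρ → ∀ i (θ' : EuclideanSpace ℝ (Fin p)) (m : Fin k → EuclideanSpace ℝ (Fin p)),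
      iteratedFDeriv ℝ k (F i) θ' m
        = (1 / (n:ℝ)) * (iteratedDeriv k ρ (c i + ℓ i θ') * ∏ j, ℓ i (m j)) := by
    intro k h i θ' m
    have h1 : iteratedFDeriv ℝ k (F i) θ'
        = (1 / (n:ℝ)) • iteratedFDeriv ℝ k (fun θ' : EuclideanSpace ℝ (Fin p) => ρ (c i + ℓ i θ')) θ' :=
      iteratedFDeriv_const_smul_apply' (haff k i h).contDiffAt
    rw [h1, ContinuousMultilinearMap.smul_apply, smul_eq_mul,
      affine_comp_iteratedFDeriv k ρ h (c i) (ℓ i) θ' m]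
  have hρC2 : ContDiff ℝ 2 ρ := hρC3.of_le (by norm_num)
  have h3 : iteratedFDeriv ℝ 3 L θ ![w, u, u]
      = ∑ i, (1 / (n:ℝ)) * (iteratedDeriv 3 ρ (c i + ℓ i θ) * (ℓ i w * ℓ i u * ℓ i u)) := by
    rw [hLF, iteratedFDeriv_sum (fun i _ => hFc 3 hρC3 i)]
    rw [Finset.sum_apply, ContinuousMultilinearMap.sum_apply]
    refine Finset.sum_congr rfl fun i _ => ?_
    rw [hD 3 hρC3 i θ ![w, u, u]]
    congr 1
    rw [Fin.prod_univ_three]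
    simp
  have h2 : iteratedFDeriv ℝ 2 L θ ![u, u]
      = ∑ i, (1 / (n:ℝ)) * (iteratedDeriv 2 ρ (c i + ℓ i θ) * (ℓ i u * ℓ i u)) := by
    rw [hLF, iteratedFDeriv_sum (fun i _ => hFc 2 hρC2 i)]
    rw [Finset.sum_apply, ContinuousMultilinearMap.sum_apply]
    refine Finset.sum_congr rfl fun i _ => ?_
    rw [hD 2 hρC2 i θ ![u, u]]
    congr 1
    rw [Fin.prod_univ_two]
    simp
  have hb : ∀ i (z : EuclideanSpace ℝ (Fin p)), |ℓ i z| ≤ C * ‖z‖ := by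
    intro i z
    rw [hℓapp]
    have h1 : |-(v i) * ⟪x i, z⟫| = |⟪v i • x i, z⟫| := by
      rw [real_inner_smul_left, neg_mul, abs_neg]
    rw [h1]
    calc |⟪v i • x i, z⟫| ≤ ‖v i • x i‖ * ‖z‖ := abs_real_inner_le_norm _ _
      _ ≤ C * ‖z‖ := mul_le_mul_of_nonneg_right (hvx i) (norm_nonneg z)
  rw [h3, h2]
  calc |∑ i, (1 / (n:ℝ)) * (iteratedDeriv 3 ρ (c i + ℓ i θ) * (ℓ i w * ℓ i u * ℓ i u))|
      ≤ ∑ i, |(1 / (n:ℝ)) * (iteratedDeriv 3 ρ (c i + ℓ i θ) * (ℓ i w * ℓ i u * ℓ i u))| :=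
        Finset.abs_sum_le_sum_abs _ _
    _ ≤ ∑ i, γ * C * ‖w‖ *
          ((1 / (n:ℝ)) * (iteratedDeriv 2 ρ (c i + ℓ i θ) * (ℓ i u * ℓ i u))) := by
        refine Finset.sum_le_sum fun i _ => ?_
        set D3 := iteratedDeriv 3 ρ (c i + ℓ i θ)
        set D2 := iteratedDeriv 2 ρ (c i + ℓ i θ)
        set aw := ℓ i w
        set au := ℓ i u
        have h1 : |D3| ≤ γ * D2 := hρSC _
        have h2' : |aw| ≤ C * ‖w‖ := hb i w
        have hγD2 : 0 ≤ γ * D2 := le_trans (abs_nonneg _) h1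
        have key : |D3 * (aw * au * au)| ≤ γ * D2 * (C * ‖w‖) * (au * au) := by
          rw [abs_mul]
          have h4 : |aw * au * au| = |aw| * (au * au) := by
            rw [abs_mul, abs_mul, mul_assoc, abs_mul_abs_self]
          rw [h4]
          calc |D3| * (|aw| * (au * au)) = (|D3| * |aw|) * (au * au) := by ring
            _ ≤ ((γ * D2) * (C * ‖w‖)) * (au * au) :=
                mul_le_mul_of_nonneg_right
                  (mul_le_mul h1 h2' (abs_nonneg _) hγD2) (mul_self_nonneg _)
        calc |(1 / (n:ℝ)) * (D3 * (aw * au * au))|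
            = (1 / (n:ℝ)) * |D3 * (aw * au * au)| := by
              rw [abs_mul, abs_of_nonneg hinv]
          _ ≤ (1 / (n:ℝ)) * (γ * D2 * (C * ‖w‖) * (au * au)) :=
              mul_le_mul_of_nonneg_left key hinv
          _ = γ * C * ‖w‖ * ((1 / (n:ℝ)) * (D2 * (au * au))) := by ring
    _ = γ * C * (∑ i, (1 / (n:ℝ)) * (iteratedDeriv 2 ρ (c i + ℓ i θ) * (ℓ i u * ℓ i u))) * ‖w‖ := by
        rw [← Finset.mul_sum]
        ring
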